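/- Let l ≥ 1 and J ≥ 1 be integers, f₀ : ℝ → ℂ a Schwartz function not identically zero on (0,∞), f(s) = s^l f₀(s), and M_J = sup_{r>0} |r^J f(r)|. Fix a > 1 and 0 < η < L < ∞. For integers M, N ≥ 0 define h_{M,N}(λ) = Σ_{j=-M}^{N} |f(a^{2j}λ)|² and h(λ) = Σ_{j∈ℤ} |f(a^{2j}λ)|² (the latter series converging for λ ∈ [η,L]). Then for every λ ∈ [η, L], |h_{M,N}(λ) − h(λ)| ≤ c'_L / a^{4Ml} + C'_η / a^{4NJ}, where c'_L = L^{2l}·(sup_{s≥0}|f₀(s)|)² / (a^{4l} − 1) and C'_η = M_J² / ((a^{4J} − 1) η^{2J}). -/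

import Mathlib

set_option maxHeartbeats 1000000


/-- Quantitative convergence of the truncated Daubechies sum: with `f s = s^l f₀ s`,
`M_J = sup_{r>0} r^J |f(r)|`, `a > 1`, `0 < η < L`, the series
`h(λ) = Σ_{j∈ℤ} |f(a^{2j}λ)|²` converges for `λ ∈ [η, L]` and for all `M, N ≥ 0`
`|Σ_{j=-M}^N |f(a^{2j}λ)|² − h(λ)| ≤ c'_L / a^{4Ml} + C'_η / a^{4NJ}` where
`c'_L = L^{2l} ‖f₀‖_∞² / (a^{4l} − 1)` and `C'_η = M_J² / ((a^{4J} − 1) η^{2J})`. -/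
theorem stmt5 (l J : ℕ) (hl : 1 ≤ l) (hJ : 1 ≤ J)
    (f₀ : SchwartzMap ℝ ℂ) (hf₀ : ∃ s : ℝ, 0 < s ∧ f₀ s ≠ 0)
    (f : ℝ → ℂ) (hf : ∀ s : ℝ, f s = (s : ℂ) ^ l * f₀ s)
    (MJ : ℝ) (hMJ : MJ = ⨆ r : Set.Ioi (0 : ℝ), (r : ℝ) ^ J * ‖f (r : ℝ)‖)
    (a : ℝ) (ha : 1 < a)
    (η L : ℝ) (hη : 0 < η) (hηL : η < L)
    (c'L C'η : ℝ)
    (hc'L : c'L = L ^ (2 * l) * (⨆ s : Set.Ici (0 : ℝ), ‖f₀ (s : ℝ)‖) ^ 2 / (a ^ (4 * l) - 1))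
    (hC'η : C'η = MJ ^ 2 / ((a ^ (4 * J) - 1) * η ^ (2 * J))) :
    ∀ lam ∈ Set.Icc η L,
      Summable (fun j : ℤ => ‖f (a ^ (2 * j) * lam)‖ ^ 2) ∧
      ∀ M N : ℕ,
        |(∑ j ∈ Finset.Icc (-(M : ℤ)) (N : ℤ), ‖f (a ^ (2 * j) * lam)‖ ^ 2) -
            ∑' j : ℤ, ‖f (a ^ (2 * j) * lam)‖ ^ 2|
          ≤ c'L / a ^ (4 * M * l) + C'η / a ^ (4 * N * J) := by
  have ha0 : (0:ℝ) < a := lt_trans one_pos ha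
  obtain ⟨C₀, hC₀pos, hC₀⟩ := f₀.decay 0 0
  obtain ⟨C₁, hC₁pos, hC₁⟩ := f₀.decay (J + l) 0
  simp only [norm_iteratedFDeriv_zero, pow_zero, one_mul] at hC₀
  simp only [norm_iteratedFDeriv_zero] at hC₁
  set S : ℝ := ⨆ s : Set.Ici (0 : ℝ), ‖f₀ (s : ℝ)‖ with hSdef
  have hSb : ∀ s : ℝ, 0 ≤ s → ‖f₀ s‖ ≤ S := by
    intro s hs
    exact le_ciSup (f := fun s : Set.Ici (0:ℝ) => ‖f₀ (s:ℝ)‖)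
      ⟨C₀, by rintro x ⟨t, rfl⟩; exact hC₀ t⟩ ⟨s, hs⟩
  have hS0 : 0 ≤ S := le_trans (norm_nonneg _) (hSb 0 le_rfl)
  have hfb : ∀ r : ℝ, 0 ≤ r → ‖f r‖ ≤ S * r ^ l := by
    intro r hr
    rw [hf, norm_mul, norm_pow, Complex.norm_real, Real.norm_eq_abs, abs_of_nonneg hr]
    calc r ^ l * ‖f₀ r‖ ≤ r ^ l * S := by
          exact mul_le_mul_of_nonneg_left (hSb r hr) (by positivity)
      _ = S * r ^ l := mul_comm _ _
  have hMJb : ∀ r : ℝ, 0 < r → r ^ J * ‖f r‖ ≤ MJ := by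
    intro r hr
    rw [hMJ]
    refine le_ciSup (f := fun r : Set.Ioi (0:ℝ) => (r:ℝ) ^ J * ‖f (r:ℝ)‖)
      ⟨C₁, ?_⟩ ⟨r, hr⟩
    rintro x ⟨t, rfl⟩
    have ht : (0:ℝ) < t := t.2
    show (t:ℝ) ^ J * ‖f (t:ℝ)‖ ≤ C₁
    rw [hf, norm_mul, norm_pow, Complex.norm_real, Real.norm_eq_abs, abs_of_nonneg ht.le,
      ← mul_assoc, ← pow_add]
    have := hC₁ (t:ℝ)
    rwa [Real.norm_eq_abs, abs_of_nonneg ht.le] at this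
  have hMJ0 : 0 ≤ MJ := le_trans (by positivity) (hMJb 1 one_pos)
  -- base constants
  have hAgt : 1 < a ^ (4 * l) := one_lt_pow₀ ha (by omega)
  have hBgt : 1 < a ^ (4 * J) := one_lt_pow₀ ha (by omega)
  set A : ℝ := a ^ (4 * l) with hA
  set B : ℝ := a ^ (4 * J) with hB
  have hA0 : 0 < A := lt_trans one_pos hAgt
  have hB0 : 0 < B := lt_trans one_pos hBgt
  set rn : ℝ := A⁻¹ with hrn
  set rp : ℝ := B⁻¹ with hrp
  have hrn0 : 0 ≤ rn := by positivity
  have hrp0 : 0 ≤ rp := by positivity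
  have hrn1 : rn < 1 := inv_lt_one_of_one_lt₀ hAgt
  have hrp1 : rp < 1 := inv_lt_one_of_one_lt₀ hBgt
  set Cn : ℝ := S ^ 2 * L ^ (2 * l) with hCn
  set Cp : ℝ := MJ ^ 2 / η ^ (2 * J) with hCp
  have hL0 : 0 < L := lt_trans hη hηL
  have hCn0 : 0 ≤ Cn := by positivity
  have hCp0 : 0 ≤ Cp := by positivity
  intro lam hlam
  have hlam0 : 0 < lam := lt_of_lt_of_le hη hlam.1
  set g : ℤ → ℝ := fun j => ‖f (a ^ (2 * j) * lam)‖ ^ 2 with hg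
  have hgnn : ∀ j, 0 ≤ g j := fun j => sq_nonneg _
  -- negative side bound
  have hbneg : ∀ n : ℕ, g (-(n:ℤ)) ≤ Cn * rn ^ n := by
    intro n
    have hz : a ^ (2 * (-(n:ℤ))) = ((a ^ (2 * n) : ℝ))⁻¹ := by
      rw [show (2 * (-(n:ℤ))) = -((2*n : ℕ) : ℤ) by push_cast; ring, zpow_neg, zpow_natCast]
    set r : ℝ := a ^ (2 * (-(n:ℤ))) * lam with hr
    have hr0 : 0 ≤ r := by
      have : (0:ℝ) < a ^ (2 * (-(n:ℤ))) := zpow_pos ha0 _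
      positivity
    have h1 : g (-(n:ℤ)) ≤ (S * r ^ l) ^ 2 := by
      have := hfb r hr0
      have h0 : (0:ℝ) ≤ ‖f r‖ := norm_nonneg _
      calc g (-(n:ℤ)) = ‖f r‖ ^ 2 := rfl
        _ ≤ (S * r ^ l) ^ 2 := by nlinarith
    refine h1.trans ?_
    have hrl : r ^ (2 * l) ≤ rn ^ n * L ^ (2 * l) := by
      have hxy : r ^ (2 * l) = (a ^ (2*n) : ℝ)⁻¹ ^ (2 * l) * lam ^ (2 * l) := by
        rw [hr, hz, mul_pow]
      rw [hxy]
      have h2 : ((a:ℝ) ^ (2*n))⁻¹ ^ (2 * l) = rn ^ n := by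
        rw [hrn, hA, ← inv_pow, ← inv_pow, ← pow_mul, ← pow_mul]
        ring_nf
      rw [h2]
      have : lam ^ (2 * l) ≤ L ^ (2 * l) := pow_le_pow_left₀ hlam0.le hlam.2 _
      exact mul_le_mul_of_nonneg_left this (by positivity)
    calc (S * r ^ l) ^ 2 = S ^ 2 * r ^ (2 * l) := by rw [mul_pow, ← pow_mul]; ring_nf
      _ ≤ S ^ 2 * (rn ^ n * L ^ (2 * l)) := mul_le_mul_of_nonneg_left hrl (by positivity)
      _ = Cn * rn ^ n := by rw [hCn]; ring
  -- positive side bound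
  have hbpos : ∀ n : ℕ, g ((n:ℤ)) ≤ Cp * rp ^ n := by
    intro n
    have hz : a ^ (2 * ((n:ℤ))) = (a ^ (2 * n) : ℝ) := by
      rw [show (2 * ((n:ℤ))) = ((2*n : ℕ) : ℤ) by push_cast; ring, zpow_natCast]
    set r : ℝ := a ^ (2 * ((n:ℤ))) * lam with hr
    have hr0 : 0 < r := by
      have : (0:ℝ) < a ^ (2 * ((n:ℤ))) := zpow_pos ha0 _
      positivity
    have hfr : ‖f r‖ ≤ MJ / r ^ J := by
      rw [le_div_iff₀ (by positivity)]
      have := hMJb r hr0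
      linarith [hMJb r hr0, mul_comm (‖f r‖) (r ^ J)]
    have h1 : g ((n:ℤ)) ≤ MJ ^ 2 / r ^ (2 * J) := by
      have h0 : (0:ℝ) ≤ ‖f r‖ := norm_nonneg _
      have hd : (0:ℝ) ≤ MJ / r ^ J := by positivity
      calc g ((n:ℤ)) = ‖f r‖ ^ 2 := rfl
        _ ≤ (MJ / r ^ J) ^ 2 := by nlinarith
        _ = MJ ^ 2 / r ^ (2 * J) := by rw [div_pow, ← pow_mul]; ring_nf
    refine h1.trans ?_
    have hrlb : B ^ n * η ^ (2 * J) ≤ r ^ (2 * J) := by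
      have hxy : r ^ (2 * J) = (a ^ (2*n) : ℝ) ^ (2 * J) * lam ^ (2 * J) := by
        rw [hr, hz, mul_pow]
      rw [hxy]
      have h2 : ((a:ℝ) ^ (2*n)) ^ (2 * J) = B ^ n := by
        rw [hB, ← pow_mul, ← pow_mul]; ring_nf
      rw [h2]
      have : η ^ (2 * J) ≤ lam ^ (2 * J) := pow_le_pow_left₀ hη.le hlam.1 _
      exact mul_le_mul_of_nonneg_left this (by positivity)
    have hpos : (0:ℝ) < B ^ n * η ^ (2 * J) := by positivity
    calc MJ ^ 2 / r ^ (2 * J) ≤ MJ ^ 2 / (B ^ n * η ^ (2 * J)) := by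
          apply div_le_div_of_nonneg_left (by positivity) hpos hrlb
      _ = Cp * rp ^ n := by
          rw [hCp, hrp, inv_pow]
          field_simp
    -- end
  have hsp : Summable (fun n : ℕ => g ((n:ℤ))) :=
    Summable.of_nonneg_of_le (fun n => hgnn _) hbpos
      ((summable_geometric_of_lt_one hrp0 hrp1).mul_left Cp)
  have hsn : Summable (fun n : ℕ => g (-((n:ℤ) + 1))) := by
    refine Summable.of_nonneg_of_le (fun n => hgnn _) (fun n => ?_)
      (((summable_geometric_of_lt_one hrn0 hrn1).mul_left (Cn * rn)))
    have := hbneg (n + 1)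
    calc g (-((n:ℤ)+1)) = g (-((n+1:ℕ):ℤ)) := by norm_num
      _ ≤ Cn * rn ^ (n+1) := hbneg (n+1)
      _ = Cn * rn * rn ^ n := by ring
  have hsum : Summable g := Summable.of_nat_of_neg_add_one hsp hsn
  refine ⟨hsum, ?_⟩
  intro M N
  set s : Finset ℤ := Finset.Icc (-(M:ℤ)) (N:ℤ) with hs
  have key := Summable.sum_add_tsum_compl (s := s) hsum
  have hcompl_nn : 0 ≤ ∑' x : ↑(↑s : Set ℤ)ᶜ, g x := tsum_nonneg (fun x => hgnn _)
  have habs : |(∑ j ∈ s, g j) - ∑' j, g j| = ∑' x : ↑(↑s : Set ℤ)ᶜ, g x := by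
    rw [← key]
    rw [abs_sub_comm]
    simp [abs_of_nonneg hcompl_nn]
  rw [habs]
  -- now bound the complement sum
  classical
  set F₁ : ℤ → ℝ := fun j => if j < -(M:ℤ) then g j else 0 with hF₁
  set F₂ : ℤ → ℝ := fun j => if (N:ℤ) < j then g j else 0 with hF₂
  have hF₁nn : ∀ j, 0 ≤ F₁ j := by
    intro j; simp only [hF₁]; split_ifs with h
    · exact hgnn j
    · exact le_refl 0
  have hF₂nn : ∀ j, 0 ≤ F₂ j := by
    intro j; simp only [hF₂]; split_ifs with h
    · exact hgnn j
    · exact le_refl 0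
  -- injections
  set i₁ : ℕ → ℤ := fun k => -(M:ℤ) - 1 - k with hi₁def
  set i₂ : ℕ → ℤ := fun k => (N:ℤ) + 1 + k with hi₂def
  have hi₁ : Function.Injective i₁ := by
    intro x y hxy; simp only [hi₁def] at hxy; omega
  have hi₂ : Function.Injective i₂ := by
    intro x y hxy; simp only [hi₂def] at hxy; omega
  have hs₁ : Function.support F₁ ⊆ Set.range i₁ := by
    intro j hj
    have hjlt : j < -(M:ℤ) := by
      by_contra h
      simp [hF₁, h] at hj
    exact ⟨(-(M:ℤ) - 1 - j).toNat, by simp only [hi₁def]; omega⟩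
  have hs₂ : Function.support F₂ ⊆ Set.range i₂ := by
    intro j hj
    have hjlt : (N:ℤ) < j := by
      by_contra h
      simp [hF₂, h] at hj
    exact ⟨(j - (N:ℤ) - 1).toNat, by simp only [hi₂def]; omega⟩
  -- comparison bounds along the injections
  have hcb₁ : ∀ k : ℕ, F₁ (i₁ k) ≤ Cn * rn ^ (M + 1) * rn ^ k := by
    intro k
    have h1 : i₁ k = -(((M + 1 + k : ℕ)):ℤ) := by simp only [hi₁def]; push_cast; ring
    have h2 : i₁ k < -(M:ℤ) := by simp only [hi₁def]; omega
    calc F₁ (i₁ k) = g (i₁ k) := by simp [hF₁, h2]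
      _ = g (-(((M + 1 + k : ℕ)):ℤ)) := by rw [h1]
      _ ≤ Cn * rn ^ (M + 1 + k) := hbneg _
      _ = Cn * rn ^ (M + 1) * rn ^ k := by rw [pow_add]; ring
  have hcb₂ : ∀ k : ℕ, F₂ (i₂ k) ≤ Cp * rp ^ (N + 1) * rp ^ k := by
    intro k
    have h1 : i₂ k = (((N + 1 + k : ℕ)):ℤ) := by simp only [hi₂def]; push_cast; ring
    have h2 : (N:ℤ) < i₂ k := by simp only [hi₂def]; omega
    calc F₂ (i₂ k) = g (i₂ k) := by simp [hF₂, h2]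
      _ = g ((((N + 1 + k : ℕ)):ℤ)) := by rw [h1]
      _ ≤ Cp * rp ^ (N + 1 + k) := hbpos _
      _ = Cp * rp ^ (N + 1) * rp ^ k := by rw [pow_add]; ring
  have hgeo_n : Summable (fun k : ℕ => Cn * rn ^ (M+1) * rn ^ k) :=
    (summable_geometric_of_lt_one hrn0 hrn1).mul_left _
  have hgeo_p : Summable (fun k : ℕ => Cp * rp ^ (N+1) * rp ^ k) :=
    (summable_geometric_of_lt_one hrp0 hrp1).mul_left _
  have hsumF₁c : Summable (F₁ ∘ i₁) :=
    Summable.of_nonneg_of_le (fun k => hF₁nn _) hcb₁ hgeo_n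
  have hsumF₂c : Summable (F₂ ∘ i₂) :=
    Summable.of_nonneg_of_le (fun k => hF₂nn _) hcb₂ hgeo_p
  have hsumF₁ : Summable F₁ := (hi₁.summable_iff (fun x hx => by
    by_contra h; exact hx (hs₁ h))).mp hsumF₁c
  have hsumF₂ : Summable F₂ := (hi₂.summable_iff (fun x hx => by
    by_contra h; exact hx (hs₂ h))).mp hsumF₂c
  have htF₁ : ∑' j, F₁ j ≤ Cn * rn ^ (M + 1) * (1 - rn)⁻¹ := by
    rw [← hi₁.tsum_eq hs₁]
    calc ∑' k : ℕ, F₁ (i₁ k) ≤ ∑' k : ℕ, Cn * rn ^ (M+1) * rn ^ k :=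
          Summable.tsum_le_tsum hcb₁ hsumF₁c hgeo_n
      _ = Cn * rn ^ (M + 1) * (1 - rn)⁻¹ := by
          rw [tsum_mul_left, tsum_geometric_of_lt_one hrn0 hrn1]
  have htF₂ : ∑' j, F₂ j ≤ Cp * rp ^ (N + 1) * (1 - rp)⁻¹ := by
    rw [← hi₂.tsum_eq hs₂]
    calc ∑' k : ℕ, F₂ (i₂ k) ≤ ∑' k : ℕ, Cp * rp ^ (N+1) * rp ^ k :=
          Summable.tsum_le_tsum hcb₂ hsumF₂c hgeo_p
      _ = Cp * rp ^ (N + 1) * (1 - rp)⁻¹ := by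
          rw [tsum_mul_left, tsum_geometric_of_lt_one hrp0 hrp1]
  -- compl tsum ≤ tsum F₁ + tsum F₂
  have hind : ∀ j : ℤ, (↑s : Set ℤ)ᶜ.indicator g j ≤ F₁ j + F₂ j := by
    intro j
    by_cases hj : j ∈ (↑s : Set ℤ)ᶜ
    · rw [Set.indicator_of_mem hj]
      have : j < -(M:ℤ) ∨ (N:ℤ) < j := by
        simp only [Set.mem_compl_iff, Finset.coe_Icc, Set.mem_Icc, hs, not_and_or, not_le] at hj
        omega
      rcases this with h | h
      · have h2 : ¬ ((N:ℤ) < j) := by omega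
        simp [hF₁, hF₂, h, h2]
      · have h2 : ¬ (j < -(M:ℤ)) := by omega
        simp [hF₁, hF₂, h, h2]
    · rw [Set.indicator_of_notMem hj]
      exact add_nonneg (hF₁nn j) (hF₂nn j)
  have hcompl_le : ∑' x : ↑(↑s : Set ℤ)ᶜ, g x ≤
      Cn * rn ^ (M + 1) * (1 - rn)⁻¹ + Cp * rp ^ (N + 1) * (1 - rp)⁻¹ := by
    rw [tsum_subtype]
    calc ∑' j, (↑s : Set ℤ)ᶜ.indicator g j ≤ ∑' j, (F₁ j + F₂ j) :=
          Summable.tsum_le_tsum hind (hsum.indicator _) (hsumF₁.add hsumF₂)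
      _ = (∑' j, F₁ j) + ∑' j, F₂ j := Summable.tsum_add hsumF₁ hsumF₂
      _ ≤ _ := add_le_add htF₁ htF₂
  refine hcompl_le.trans (le_of_eq ?_)
  -- final arithmetic
  have hAe : a ^ (4 * M * l) = A ^ M := by rw [hA, ← pow_mul]; ring_nf
  have hBe : a ^ (4 * N * J) = B ^ N := by rw [hB, ← pow_mul]; ring_nf
  have hA1 : A - 1 ≠ 0 := by linarith
  have hB1 : B - 1 ≠ 0 := by linarith
  have hAne : A ≠ 0 := ne_of_gt hA0
  have hBne : B ≠ 0 := ne_of_gt hB0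
  have h1rn : 1 - rn = (A - 1) / A := by rw [hrn]; field_simp
  have h1rp : 1 - rp = (B - 1) / B := by rw [hrp]; field_simp
  have hηne : η ^ (2 * J) ≠ 0 := by positivity
  rw [hc'L, hC'η, hAe, hBe, h1rn, h1rp, hCn, hCp, hrn, hrp]
  rw [inv_pow, inv_pow]
  field_simp
  ring
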